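/- arXiv:1004.1654 — 7 statements merged into one kernel-verified Lean document; each statement's English description precedes it below -/
import Mathlib

section
/- For every positive integer k, reals c, δ > 0, and ε with 0 < ε ≤ 1/3, there exists a positive real Z₀ = Z₀(k, c, δ, ε) such that: if S is a δ-separated set of points contained in an interval I of length L ≥ Z₀ with |S| ≥ cL, then S contains k points that form an ε-approximate arithmetic progression of k terms. -/
/-- A set of reals is `δ`-separated if distinct points are at distance at least `δ`. -/
def Separated (δ : ℝ) (S : Finset ℝ) : Prop :=
  ∀ x ∈ S, ∀ y ∈ S, x ≠ y → δ ≤ |x - y|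

/-- `b 0, …, b (k-1)` is an ε-approximate arithmetic progression of `k` terms. -/
def IsApproxAP (ε : ℝ) (k : ℕ) (b : Fin k → ℝ) : Prop :=
  ∃ a D : ℝ, 0 < D ∧ ∀ p : Fin k, |b p - (a + p * D)| ≤ ε * D

/-- A `δ`-separated subset of an interval of length `ℓ` has at most `ℓ/δ + 1` points. -/
lemma sep_card_bound (δ : ℝ) (hδ : 0 < δ) (T : Finset ℝ) (hsep : Separated δ T)
    (u ℓ : ℝ) (hℓ : 0 ≤ ℓ) (hT : ∀ x ∈ T, u ≤ x ∧ x ≤ u + ℓ) :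
    (T.card : ℝ) ≤ ℓ / δ + 1 := by
  have hmap : ∀ x ∈ T, ⌊(x - u) / δ⌋ ∈ Finset.Icc (0 : ℤ) ⌊ℓ / δ⌋ := by
    intro x hx
    obtain ⟨h1, h2⟩ := hT x hx
    rw [Finset.mem_Icc]
    refine ⟨Int.floor_nonneg.2 (div_nonneg (by linarith) hδ.le), ?_⟩
    exact Int.floor_le_floor (by gcongr; linarith)
  have hinj : Set.InjOn (fun x => ⌊(x - u) / δ⌋) T := by
    intro x hx y hy hxy
    by_contra hne
    have hsep' := hsep x hx y hy hne
    have h1 : |(x - u)/δ - (y - u)/δ| < 1 := Int.abs_sub_lt_one_of_floor_eq_floor hxy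
    rw [div_sub_div_same, abs_div, abs_of_pos hδ, div_lt_one hδ] at h1
    have hxy' : x - u - (y - u) = x - y := by ring
    rw [hxy'] at h1
    linarith
  have hcard := Finset.card_le_card_of_injOn _ hmap hinj
  have h2 : ((Finset.Icc (0 : ℤ) ⌊ℓ / δ⌋).card : ℝ) ≤ ℓ/δ + 1 := by
    rw [Int.card_Icc]
    have h0 : (0:ℤ) ≤ ⌊ℓ/δ⌋ := Int.floor_nonneg.2 (div_nonneg hℓ hδ.le)
    have h3 : ((⌊ℓ/δ⌋ + 1 - 0).toNat : ℤ) = ⌊ℓ/δ⌋ + 1 := by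
      rw [Int.toNat_of_nonneg (by omega)]; ring
    have h4 : ((⌊ℓ/δ⌋ + 1 - 0).toNat : ℝ) = (⌊ℓ/δ⌋ : ℝ) + 1 := by exact_mod_cast h3
    rw [h4]
    have := Int.floor_le (ℓ/δ)
    linarith
  calc (T.card : ℝ) ≤ _ := by exact_mod_cast hcard
    _ ≤ ℓ/δ + 1 := h2

/-- From an interval in which every window of length `2ℓ/M` meets `S`, extract an
ε-approximate arithmetic progression of `k` terms. -/
lemma extract_ap (k : ℕ) (hk : 0 < k) (ε : ℝ) (hε : 0 < ε) (hε' : ε ≤ 1 / 3)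
    (M : ℕ) (hMε : (k : ℝ) ≤ M * ε) (S : Finset ℝ) (u ℓ : ℝ) (hℓ : 0 < ℓ)
    (H : ∀ x : ℝ, u ≤ x → x + 2 * ℓ / (M : ℝ) ≤ u + ℓ →
      ∃ s ∈ S, x ≤ s ∧ s ≤ x + 2 * ℓ / (M : ℝ)) :
    ∃ b : Fin k → ℝ, Function.Injective b ∧ (∀ p, b p ∈ S) ∧ IsApproxAP ε k b := by
  have hM0 : 0 < (M : ℝ) := by
    rcases Nat.eq_zero_or_pos M with h | h
    · exfalso; rw [h] at hMε; push_cast at hMε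
      have : (1:ℝ) ≤ (k:ℝ) := by exact_mod_cast hk
      nlinarith
    · exact_mod_cast h
  set D : ℝ := ℓ / (M * ε) with hD
  have hDpos : 0 < D := div_pos hℓ (by positivity)
  have hw : 2 * ℓ / M = 2 * ε * D := by
    rw [hD]; field_simp
  have hwin : ∀ p : Fin k, ∃ s ∈ S, u + p * D ≤ s ∧ s ≤ u + p * D + 2 * ε * D := by
    intro p
    have hp : (p : ℝ) ≤ (k : ℝ) - 1 := by
      have : (p : ℕ) ≤ k - 1 := Nat.le_sub_one_of_lt p.isLt
      have h2 : ((p : ℕ) : ℝ) ≤ ((k - 1 : ℕ) : ℝ) := Nat.cast_le.2 this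
      rwa [Nat.cast_sub hk, Nat.cast_one] at h2
    have h1 : u ≤ u + p * D := by
      have : (0:ℝ) ≤ p * D := by positivity
      linarith
    have h2 : (u + p * D) + 2 * ℓ / M ≤ u + ℓ := by
      rw [hw]
      have hkD : (k : ℝ) * D ≤ ℓ := by
        rw [hD, mul_div_assoc', div_le_iff₀ (by positivity)]
        nlinarith
      nlinarith
    obtain ⟨s, hs, hs1, hs2⟩ := H (u + p * D) h1 h2
    exact ⟨s, hs, hs1, by rwa [hw] at hs2⟩
  choose b hbS hb1 hb2 using hwin
  have hmono : ∀ p q : Fin k, (p : ℕ) < (q : ℕ) → b p < b q := by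
    intro p q hpq
    have hpq' : (p : ℝ) + 1 ≤ (q : ℝ) := by exact_mod_cast hpq
    have := hb2 p
    have := hb1 q
    nlinarith [hDpos, hε]
  refine ⟨b, ?_, hbS, u + ε * D, D, hDpos, ?_⟩
  · intro p q hpq
    rcases lt_trichotomy (p : ℕ) (q : ℕ) with h | h | h
    · exact absurd hpq (ne_of_lt (hmono p q h))
    · exact Fin.ext h
    · exact absurd hpq.symm (ne_of_lt (hmono q p h))
  · intro p
    rw [abs_le]
    constructor <;> [nlinarith [hb1 p]; nlinarith [hb2 p]]

/-- Density increment iteration: if a block has too many points for the current scale,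
then some subinterval has all of its windows meeting `S`. -/
lemma iterate_lemma (δ : ℝ) (hδ : 0 < δ) (S : Finset ℝ) (hsep : Separated δ S)
    (M : ℕ) (hM : 2 ≤ M) :
    ∀ (i : ℕ) (u ℓ : ℝ), 0 < ℓ →
      ((M : ℝ) - 1) ^ i * (ℓ / ((M : ℝ) ^ i * δ) + 1)
        < ((S.filter (fun x => u ≤ x ∧ x ≤ u + ℓ)).card : ℝ) →
      ∃ v ℓ' : ℝ, 0 < ℓ' ∧
        ∀ x : ℝ, v ≤ x → x + 2 * ℓ' / (M : ℝ) ≤ v + ℓ' →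
          ∃ s ∈ S, x ≤ s ∧ s ≤ x + 2 * ℓ' / (M : ℝ) := by
  have hM0 : (0:ℝ) < (M:ℝ) := by positivity
  intro i
  induction i with
  | zero =>
    intro u ℓ hℓ hcard
    exfalso
    simp only [pow_zero, one_mul] at hcard
    have hbound := sep_card_bound δ hδ (S.filter (fun x => u ≤ x ∧ x ≤ u + ℓ))
      (fun x hx y hy => hsep x (Finset.mem_filter.1 hx).1 y (Finset.mem_filter.1 hy).1)
      u ℓ hℓ.le (fun x hx => (Finset.mem_filter.1 hx).2)
    linarith
  | succ i IH =>
    intro u ℓ hℓ hcard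
    by_cases hsucc : ∀ x : ℝ, u ≤ x → x + 2 * ℓ / (M:ℝ) ≤ u + ℓ →
        ∃ s ∈ S, x ≤ s ∧ s ≤ x + 2 * ℓ / (M:ℝ)
    · exact ⟨u, ℓ, hℓ, hsucc⟩
    push_neg at hsucc
    obtain ⟨x, hxu, hxℓ, hempty⟩ := hsucc
    set ℓ' : ℝ := ℓ / M with hℓ'def
    have hℓ'pos : 0 < ℓ' := by positivity
    have hMℓ : (M:ℝ) * ℓ' = ℓ := by rw [hℓ'def]; field_simp
    have h2ℓ' : 2 * ℓ / (M:ℝ) = 2 * ℓ' := by rw [hℓ'def]; ring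
    rw [h2ℓ'] at hxℓ hempty
    set j₀ : ℕ := ⌈(x - u) / ℓ'⌉₊ with hj₀def
    have hxu' : 0 ≤ (x - u) / ℓ' := div_nonneg (by linarith) hℓ'pos.le
    have hj₀x : x ≤ u + j₀ * ℓ' := by
      have := Nat.le_ceil ((x - u) / ℓ')
      rw [div_le_iff₀ hℓ'pos] at this
      linarith
    have hj₀x2 : u + j₀ * ℓ' + ℓ' ≤ x + 2 * ℓ' := by
      have h := Nat.ceil_lt_add_one hxu'
      have h2 : (j₀:ℝ) * ℓ' < ((x - u)/ℓ' + 1) * ℓ' :=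
        mul_lt_mul_of_pos_right h hℓ'pos
      have h3 : ((x - u)/ℓ' + 1) * ℓ' = x - u + ℓ' := by field_simp
      rw [h3] at h2
      linarith
    have hj₀M : j₀ < M := by
      have h3 : ((j₀:ℝ) + 1) ≤ (M:ℝ) :=
        le_of_mul_le_mul_right (by nlinarith) hℓ'pos
      have h4 : j₀ + 1 ≤ M := by exact_mod_cast h3
      omega
    have hblockempty : S.filter (fun y => u + j₀ * ℓ' ≤ y ∧ y ≤ u + j₀ * ℓ' + ℓ') = ∅ := by
      rw [Finset.filter_eq_empty_iff]
      rintro y hy ⟨h1, h2⟩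
      have := hempty y hy (by linarith)
      linarith
    have hcover : S.filter (fun y => u ≤ y ∧ y ≤ u + ℓ) ⊆
        (Finset.range M).biUnion
          (fun j => S.filter (fun y => u + j * ℓ' ≤ y ∧ y ≤ u + j * ℓ' + ℓ')) := by
      intro y hy
      obtain ⟨hyS, hy1, hy2⟩ := Finset.mem_filter.1 hy
      rw [Finset.mem_biUnion]
      set jy : ℕ := min ⌊(y - u) / ℓ'⌋₊ (M - 1) with hjydef
      refine ⟨jy, Finset.mem_range.2 (by omega), Finset.mem_filter.2 ⟨hyS, ?_⟩⟩
      have hy0 : 0 ≤ (y - u) / ℓ' := div_nonneg (by linarith) hℓ'pos.le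
      rcases le_or_gt ⌊(y - u) / ℓ'⌋₊ (M - 1) with hcase | hcase
      · have hjy : jy = ⌊(y - u) / ℓ'⌋₊ := min_eq_left hcase
        constructor
        · have := Nat.floor_le hy0
          rw [le_div_iff₀ hℓ'pos] at this
          rw [hjy]
          linarith
        · have := Nat.lt_floor_add_one ((y - u) / ℓ')
          rw [div_lt_iff₀ hℓ'pos] at this
          rw [hjy]
          linarith
      · have hjy : jy = M - 1 := min_eq_right (by omega)
        have hone : (1:ℕ) ≤ M := by omega
        have hjyR : ((jy : ℕ) : ℝ) = (M : ℝ) - 1 := by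
          rw [hjy, Nat.cast_sub hone, Nat.cast_one]
        have hMfloor : (M : ℝ) ≤ (⌊(y - u) / ℓ'⌋₊ : ℝ) := by
          exact_mod_cast (by omega : M ≤ ⌊(y - u) / ℓ'⌋₊)
        have hfl : ((⌊(y - u) / ℓ'⌋₊ : ℝ)) ≤ (y - u) / ℓ' := Nat.floor_le hy0
        have hMy : (M : ℝ) * ℓ' ≤ y - u := by
          have h5 : (M:ℝ) ≤ (y-u)/ℓ' := le_trans hMfloor hfl
          rw [le_div_iff₀ hℓ'pos] at h5
          linarith
        constructor
        · rw [hjyR]; nlinarith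
        · rw [hjyR]; nlinarith
    have hsum : ((S.filter (fun y => u ≤ y ∧ y ≤ u + ℓ)).card : ℝ) ≤
        ∑ j ∈ Finset.range M,
          ((S.filter (fun y => u + j * ℓ' ≤ y ∧ y ≤ u + j * ℓ' + ℓ')).card : ℝ) := by
      have h1 := Finset.card_le_card hcover
      have h2 := Finset.card_biUnion_le (s := Finset.range M)
        (t := fun j => S.filter (fun y => u + j * ℓ' ≤ y ∧ y ≤ u + j * ℓ' + ℓ'))
      exact_mod_cast le_trans h1 h2
    set B : ℝ := ((M : ℝ) - 1) ^ i * (ℓ' / ((M : ℝ) ^ i * δ) + 1) with hBdef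
    have hBeq : ((M : ℝ) - 1) ^ (i+1) * (ℓ / ((M : ℝ) ^ (i+1) * δ) + 1) = ((M:ℝ) - 1) * B := by
      rw [hBdef, hℓ'def]
      have hMM : (M:ℝ) ^ (i+1) = (M:ℝ)^i * M := by ring
      rw [hMM]
      field_simp
      ring
    have hex : ∃ j ∈ (Finset.range M).erase j₀,
        B < ((S.filter (fun y => u + j * ℓ' ≤ y ∧ y ≤ u + j * ℓ' + ℓ')).card : ℝ) := by
      by_contra hno
      push_neg at hno
      have hsum2 : ∑ j ∈ Finset.range M,
          ((S.filter (fun y => u + j * ℓ' ≤ y ∧ y ≤ u + j * ℓ' + ℓ')).card : ℝ) ≤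
          ((M:ℝ) - 1) * B := by
        rw [← Finset.sum_erase_add _ _ (Finset.mem_range.2 hj₀M), hblockempty]
        simp only [Finset.card_empty, Nat.cast_zero, add_zero]
        have hcard_erase : ((Finset.range M).erase j₀).card = M - 1 := by
          rw [Finset.card_erase_of_mem (Finset.mem_range.2 hj₀M), Finset.card_range]
        have hone : (1:ℕ) ≤ M := by omega
        calc ∑ j ∈ (Finset.range M).erase j₀,
              ((S.filter (fun y => u + j * ℓ' ≤ y ∧ y ≤ u + j * ℓ' + ℓ')).card : ℝ)
            ≤ ∑ _j ∈ (Finset.range M).erase j₀, B :=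
              Finset.sum_le_sum (fun j hj => hno j hj)
          _ = ((M - 1 : ℕ) : ℝ) * B := by
              rw [Finset.sum_const, hcard_erase, nsmul_eq_mul]
          _ = ((M:ℝ) - 1) * B := by rw [Nat.cast_sub hone, Nat.cast_one]
      rw [hBeq] at hcard
      linarith
    obtain ⟨j, hjmem, hjcard⟩ := hex
    exact IH (u + j * ℓ') ℓ' hℓ'pos hjcard

theorem approx_ap_of_dense_separated (k : ℕ) (hk : 0 < k) (c δ ε : ℝ)
    (hc : 0 < c) (hδ : 0 < δ) (hε : 0 < ε) (hε' : ε ≤ 1 / 3) :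
    ∃ Z₀ : ℝ, 0 < Z₀ ∧
      ∀ L : ℝ, Z₀ ≤ L → ∀ t : ℝ, ∀ S : Finset ℝ,
        (∀ x ∈ S, x ∈ Set.Icc t (t + L)) → Separated δ S → c * L ≤ S.card →
        ∃ b : Fin k → ℝ, Function.Injective b ∧ (∀ p, b p ∈ S) ∧ IsApproxAP ε k b := by
  set M : ℕ := ⌈(k : ℝ) / ε⌉₊ with hMdef
  have hk1 : (1:ℝ) ≤ (k:ℝ) := by exact_mod_cast hk
  have hMk : (k : ℝ) / ε ≤ (M : ℝ) := Nat.le_ceil _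
  have hM3R : (3:ℝ) ≤ (M:ℝ) := by
    refine le_trans ?_ hMk
    rw [le_div_iff₀ hε]
    nlinarith
  have hM3 : 3 ≤ M := by exact_mod_cast hM3R
  have hM0 : (0:ℝ) < (M:ℝ) := by linarith
  have hMε : (k : ℝ) ≤ (M : ℝ) * ε := by
    rw [div_le_iff₀ hε] at hMk
    linarith
  set r : ℝ := ((M:ℝ) - 1) / (M:ℝ) with hrdef
  have hr0 : 0 ≤ r := by
    apply div_nonneg _ hM0.le
    linarith
  have hr1 : r < 1 := by
    rw [hrdef, div_lt_one hM0]
    linarith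
  obtain ⟨m, hm⟩ := exists_pow_lt_of_lt_one (show (0:ℝ) < c * δ / 2 by positivity) hr1
  have hpow0 : (0:ℝ) ≤ ((M:ℝ) - 1) ^ m := pow_nonneg (by linarith) m
  refine ⟨2 * ((M:ℝ) - 1) ^ m / c + 1, ?_, ?_⟩
  · have : (0:ℝ) ≤ 2 * ((M:ℝ) - 1) ^ m / c :=
      div_nonneg (by linarith) hc.le
    linarith
  intro L hL t S hS hsepS hcard
  have hL1 : (1:ℝ) ≤ L := by
    have : (0:ℝ) ≤ 2 * ((M:ℝ) - 1) ^ m / c := div_nonneg (by linarith) hc.le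
    linarith
  have hLpos : (0:ℝ) < L := by linarith
  have hfilter : S.filter (fun x => t ≤ x ∧ x ≤ t + L) = S := by
    apply Finset.filter_true_of_mem
    intro x hx
    exact ⟨(hS x hx).1, (hS x hx).2⟩
  have hMne : (M:ℝ) ≠ 0 := ne_of_gt hM0
  have hδne : δ ≠ 0 := ne_of_gt hδ
  have hexpand : ((M:ℝ) - 1) ^ m * (L / ((M:ℝ) ^ m * δ) + 1)
      = r ^ m * (L / δ) + ((M:ℝ) - 1) ^ m := by
    rw [hrdef, div_pow]
    field_simp
  have hkey : ((M:ℝ) - 1) ^ m * (L / ((M:ℝ) ^ m * δ) + 1) < c * L := by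
    rw [hexpand]
    have h1 : r ^ m * (L / δ) < (c * δ / 2) * (L / δ) := by
      apply mul_lt_mul_of_pos_right hm
      positivity
    have h2 : (c * δ / 2) * (L / δ) = c * L / 2 := by field_simp
    have h3 : ((M:ℝ) - 1) ^ m ≤ c * (L - 1) / 2 := by
      have h4 : 2 * ((M:ℝ) - 1) ^ m / c ≤ L - 1 := by linarith
      rw [div_le_iff₀ hc] at h4
      linarith
    nlinarith
  obtain ⟨v, ℓ', hℓ', H⟩ := iterate_lemma δ hδ S hsepS M (by omega) m t L hLpos
    (by rw [hfilter]; linarith)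
  exact extract_ap k hk ε hε hε' M hMε S v ℓ' hℓ' H
end

section
/- For every positive integer n and every ε with 0 ≤ ε < 1/3, there exists a set of n points in [0,1] that contains no ε-approximate arithmetic progression of 3 terms. In particular, the set S = {ξ^i : i = 0, …, n−1} with ξ = 1/3 − ε works. -/
/-- `q₁ < q₂ < q₃` form an ε-approximate 3-term arithmetic progression. -/
def IsApproxAP3 (ε q₁ q₂ q₃ : ℝ) : Prop :=
  q₁ < q₂ ∧ q₂ < q₃ ∧ ∃ a r : ℝ, 0 < r ∧
    |q₁ - (a - r)| ≤ ε * r ∧ |q₂ - a| ≤ ε * r ∧ |q₃ - (a + r)| ≤ ε * r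

theorem no_approx_ap3_geometric (n : ℕ) (hn : 0 < n) (ε : ℝ) (hε : 0 ≤ ε) (hε' : ε < 1 / 3) :
    ∃ S : Finset ℝ, (↑S ⊆ Set.Icc (0 : ℝ) 1) ∧ S.card = n ∧
      (∀ q₁ ∈ S, ∀ q₂ ∈ S, ∀ q₃ ∈ S, ¬ IsApproxAP3 ε q₁ q₂ q₃) ∧
      S = (Finset.range n).image (fun i => (1 / 3 - ε) ^ i) := by
  set ξ : ℝ := 1 / 3 - ε with hξdef
  have hξ0 : 0 < ξ := by rw [hξdef]; linarith
  have hξ1 : ξ < 1 := by rw [hξdef]; linarith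
  have hanti : StrictAnti fun i : ℕ => ξ ^ i := fun i j hij =>
    pow_lt_pow_right_of_lt_one₀ hξ0 hξ1 hij
  refine ⟨(Finset.range n).image (fun i => ξ ^ i), ?_, ?_, ?_, rfl⟩
  · intro x hx
    simp only [Finset.coe_image, Set.mem_image, Finset.mem_coe, Finset.mem_range] at hx
    obtain ⟨i, _, rfl⟩ := hx
    exact ⟨pow_nonneg hξ0.le i, pow_le_one₀ hξ0.le hξ1.le⟩
  · rw [Finset.card_image_of_injective _ hanti.injective, Finset.card_range]
  · intro q₁ h₁ q₂ h₂ q₃ h₃ ⟨h12, h23, a, r, hr, e1, e2, e3⟩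
    simp only [Finset.mem_image, Finset.mem_range] at h₁ h₂ h₃
    obtain ⟨i, -, rfl⟩ := h₁
    obtain ⟨j, -, rfl⟩ := h₂
    obtain ⟨k, -, rfl⟩ := h₃
    have hji : j < i := by
      by_contra h
      exact absurd (pow_le_pow_of_le_one hξ0.le hξ1.le (not_lt.1 h) : ξ ^ j ≤ ξ ^ i)
        (not_le.2 h12)
    have hkj : k < j := by
      by_contra h
      exact absurd (pow_le_pow_of_le_one hξ0.le hξ1.le (not_lt.1 h) : ξ ^ k ≤ ξ ^ j)
        (not_le.2 h23)
    have hBk : ξ ^ j ≤ ξ * ξ ^ k := by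
      calc ξ ^ j ≤ ξ ^ (k + 1) := pow_le_pow_of_le_one hξ0.le hξ1.le hkj
        _ = ξ * ξ ^ k := by ring
    have hA : 0 < ξ ^ i := pow_pos hξ0 i
    have hC : 0 < ξ ^ k := pow_pos hξ0 k
    rw [abs_le] at e1 e2 e3
    -- q₂ - q₁ ≥ (1-2ε) r, q₃ - q₂ ≤ (1+2ε) r
    have key1 : (1 - 2 * ε) * r ≤ ξ ^ j - ξ ^ i := by linarith [e1.2, e2.1]
    have key2 : ξ ^ k - ξ ^ j ≤ (1 + 2 * ε) * r := by linarith [e2.1, e3.2]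
    have h1 : (1 - ξ) * ξ ^ k ≤ (1 + 2 * ε) * r := by nlinarith
    have h2 : (1 - 2 * ε) * r < ξ * ξ ^ k := by nlinarith
    have h3 : ξ * ((1 - ξ) * ξ ^ k) ≤ ξ * ((1 + 2 * ε) * r) :=
      mul_le_mul_of_nonneg_left h1 hξ0.le
    have h4 : (1 - ξ) * ((1 - 2 * ε) * r) < (1 - ξ) * (ξ * ξ ^ k) :=
      mul_lt_mul_of_pos_left h2 (by linarith)
    rw [hξdef] at h3 h4
    nlinarith [h3, h4, hr]
end

section
/- For every positive integer n, the set S = {1/8^i : i = 0, …, n−1} ⊆ [0,1] contains no ε-approximate arithmetic progression of 3 terms for any 0 ≤ ε ≤ 1/4. -/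
lemma pow_eighth_gap (i j : ℕ) (h : (1/8:ℝ)^j < (1/8:ℝ)^i) :
    8 * (1/8:ℝ)^j ≤ (1/8:ℝ)^i := by
  have h8 : (0:ℝ) < 1/8 := by norm_num
  have hij : i < j := by
    by_contra hle
    push_neg at hle
    have := pow_le_pow_of_le_one (by norm_num : (0:ℝ) ≤ 1/8) (by norm_num) hle
    linarith
  have : (1/8:ℝ)^j ≤ (1/8:ℝ)^(i+1) :=
    pow_le_pow_of_le_one (by norm_num) (by norm_num) hij
  rw [pow_succ] at this
  linarith

theorem no_approx_ap3_powers_of_eighth (n : ℕ) (hn : 0 < n) :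
    ∀ S : Finset ℝ, S = (Finset.range n).image (fun i => (1 / 8 : ℝ) ^ i) →
      (↑S ⊆ Set.Icc (0 : ℝ) 1) ∧
      ∀ ε : ℝ, 0 ≤ ε → ε ≤ 1 / 4 →
        ∀ q₁ ∈ S, ∀ q₂ ∈ S, ∀ q₃ ∈ S, ¬ IsApproxAP3 ε q₁ q₂ q₃ := by
  intro S hS
  subst hS
  constructor
  · intro x hx
    simp only [Finset.coe_image, Set.mem_image, Finset.mem_coe, Finset.mem_range] at hx
    obtain ⟨i, -, rfl⟩ := hx
    constructor
    · positivity
    · exact pow_le_one₀ (by norm_num) (by norm_num)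
  · intro ε hε0 hε q₁ h1 q₂ h2 q₃ h3 hap
    simp only [Finset.mem_image, Finset.mem_range] at h1 h2 h3
    obtain ⟨i1, -, rfl⟩ := h1
    obtain ⟨i2, -, rfl⟩ := h2
    obtain ⟨i3, -, rfl⟩ := h3
    obtain ⟨h12, h23, a, r, hr, hq1, hq2, hq3⟩ := hap
    rw [abs_le] at hq1 hq2 hq3
    have g23 : 8 * (1/8:ℝ)^i2 ≤ (1/8:ℝ)^i3 := pow_eighth_gap _ _ h23
    have p1 : (0:ℝ) < (1/8:ℝ)^i1 := by positivity
    have p2 : (0:ℝ) < (1/8:ℝ)^i2 := by positivity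
    have her : ε * r ≤ r / 4 := by nlinarith
    linarith [hq1.1, hq1.2, hq2.1, hq2.2, hq3.1, hq3.2]
end

section
/- For every positive integers d and k, reals c, δ > 0, and ε with 0 < ε ≤ 1/3, there exists a positive real Z₀ = Z₀(d, k, c, δ, ε) such that: every δ-separated set S contained in the cube [0, L]^d with |S| ≥ cL^d and L ≥ Z₀ contains a subset forming an ε-approximate k-grid in ℝ^d. -/
/-- A set of points in `ℝ^d` is `δ`-separated if distinct points are at
Euclidean distance at least `δ`. -/
def SeparatedEuc (d : ℕ) (δ : ℝ) (S : Finset (EuclideanSpace ℝ (Fin d))) : Prop :=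
  ∀ x ∈ S, ∀ y ∈ S, x ≠ y → δ ≤ dist x y

/-- `q` is an ε-approximate `k`-grid: each `q i` lies within `ε x` of the
exact grid point `a + x • i` for some `a` and scale `x > 0`. -/
def IsApproxGrid (d k : ℕ) (ε : ℝ) (q : (Fin d → Fin k) → EuclideanSpace ℝ (Fin d)) : Prop :=
  ∃ a : EuclideanSpace ℝ (Fin d), ∃ x : ℝ, 0 < x ∧
    ∀ i : Fin d → Fin k,
      dist (q i) (WithLp.toLp 2 (fun j => a j + x * ((i j : ℕ) : ℝ)) : EuclideanSpace ℝ (Fin d)) ≤ ε * x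

open Finset

lemma euc_dist_le {d : ℕ} (x y : EuclideanSpace ℝ (Fin d)) {r : ℝ} (hr : 0 ≤ r)
    (h : ∀ j, |x j - y j| ≤ r) : dist x y ≤ Real.sqrt d * r := by
  rw [EuclideanSpace.dist_eq]
  have h1 : ∑ j, dist (x j) (y j) ^ 2 ≤ ∑ _j : Fin d, r ^ 2 := by
    refine Finset.sum_le_sum fun j _ => ?_
    rw [Real.dist_eq]
    exact pow_le_pow_left₀ (abs_nonneg _) (h j) 2
  have h2 : ∑ _j : Fin d, r ^ 2 = (d : ℝ) * r ^ 2 := by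
    simp [Finset.sum_const, nsmul_eq_mul]
  calc Real.sqrt (∑ j, dist (x j) (y j) ^ 2) ≤ Real.sqrt ((d : ℝ) * r ^ 2) := by
        exact Real.sqrt_le_sqrt (by linarith)
    _ = Real.sqrt d * r := by
        rw [Real.sqrt_mul (by positivity), Real.sqrt_sq hr]

/-- Cell index of a point in a subdivision of a cube with corner `a` into cells of
side `s`, clamped to `nmax`. -/
noncomputable def cellIdx {d : ℕ} (a : EuclideanSpace ℝ (Fin d)) (s : ℝ) (nmax : ℕ)
    (p : EuclideanSpace ℝ (Fin d)) : Fin d → ℕ :=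
  fun j => min ⌊(p j - a j) / s⌋₊ nmax

lemma cellIdx_le {d : ℕ} (a : EuclideanSpace ℝ (Fin d)) (s : ℝ) (nmax : ℕ)
    (p : EuclideanSpace ℝ (Fin d)) (j : Fin d) : cellIdx a s nmax p j ≤ nmax :=
  min_le_right _ _

lemma cellIdx_bounds {d : ℕ} {a : EuclideanSpace ℝ (Fin d)} {s : ℝ} {nmax : ℕ}
    {p : EuclideanSpace ℝ (Fin d)} {j : Fin d} (hs : 0 < s) (h0 : 0 ≤ p j - a j)
    (h1 : p j - a j ≤ ((nmax : ℝ) + 1) * s) :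
    (cellIdx a s nmax p j : ℝ) * s ≤ p j - a j ∧
      p j - a j ≤ ((cellIdx a s nmax p j : ℝ) + 1) * s := by
  set r : ℝ := (p j - a j) / s with hr
  have hr0 : 0 ≤ r := div_nonneg h0 hs.le
  have hrs : r * s = p j - a j := div_mul_cancel₀ _ hs.ne'
  have hlow : (cellIdx a s nmax p j : ℝ) ≤ r := by
    calc (cellIdx a s nmax p j : ℝ) ≤ (⌊r⌋₊ : ℝ) := by
          exact_mod_cast Nat.cast_le.mpr (min_le_left _ _)
      _ ≤ r := Nat.floor_le hr0
  constructor
  · have h2 := mul_le_mul_of_nonneg_right hlow hs.le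
    linarith
  · by_cases hc : ⌊r⌋₊ ≤ nmax
    · have hb : cellIdx a s nmax p j = ⌊r⌋₊ := min_eq_left hc
      have : r < (⌊r⌋₊ : ℝ) + 1 := Nat.lt_floor_add_one r
      rw [hb]
      nlinarith
    · have hb : cellIdx a s nmax p j = nmax := min_eq_right (le_of_not_ge hc)
      rw [hb]
      linarith

lemma same_cell_close {d : ℕ} {a : EuclideanSpace ℝ (Fin d)} {s : ℝ} {nmax : ℕ}
    {p q : EuclideanSpace ℝ (Fin d)} (hs : 0 < s)
    (hp0 : ∀ j, 0 ≤ p j - a j) (hp1 : ∀ j, p j - a j ≤ ((nmax : ℝ) + 1) * s)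
    (hq0 : ∀ j, 0 ≤ q j - a j) (hq1 : ∀ j, q j - a j ≤ ((nmax : ℝ) + 1) * s)
    (heq : cellIdx a s nmax p = cellIdx a s nmax q) : ∀ j, |p j - q j| ≤ s := by
  intro j
  obtain ⟨hpl, hpu⟩ := cellIdx_bounds hs (hp0 j) (hp1 j)
  obtain ⟨hql, hqu⟩ := cellIdx_bounds hs (hq0 j) (hq1 j)
  have hj : cellIdx a s nmax p j = cellIdx a s nmax q j := by rw [heq]
  rw [hj] at hpl hpu
  rw [abs_sub_le_iff]
  constructor <;> linarith

set_option maxHeartbeats 1000000 in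
lemma key_lemma (d k t : ℕ) (hd : 0 < d) (hk : 0 < k) (ht : 0 < t)
    (δ ε : ℝ) (hδ : 0 < δ) (hε : 0 < ε) (htε : Real.sqrt d ≤ 2 * ε * t) :
    ∀ J : ℕ, ∀ (M : ℝ) (a : EuclideanSpace ℝ (Fin d)) (S : Finset (EuclideanSpace ℝ (Fin d))),
      δ * ((t * k : ℕ) : ℝ) ^ J ≤ M →
      (∀ p ∈ S, ∀ j, p j ∈ Set.Icc (a j) (a j + M)) →
      SeparatedEuc d δ S →
      (2 * Real.sqrt d / δ) ^ d * M ^ d < (S.card : ℝ) * (1 + 1 / (2 * (k : ℝ) ^ d)) ^ J →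
      ∃ q : (Fin d → Fin k) → EuclideanSpace ℝ (Fin d),
        Function.Injective q ∧ (∀ i, q i ∈ S) ∧ IsApproxGrid d k ε q := by
  classical
  have hd1 : (1:ℝ) ≤ Real.sqrt d := Real.one_le_sqrt.mpr (by exact_mod_cast hd)
  have hkR : (0:ℝ) < (k:ℝ)^d := by positivity
  have hη : (0:ℝ) < 1 / (2 * (k:ℝ) ^ d) := by positivity
  intro J
  induction J with
  | zero =>
    intro M a S hM hsub hsep hcard
    exfalso
    simp only [pow_zero, mul_one] at hM hcard
    have hM0 : 0 < M := lt_of_lt_of_le hδ hM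
    set n₀ : ℕ := ⌊Real.sqrt d * M / δ⌋₊ with hn₀
    have hn0 : (0:ℝ) ≤ Real.sqrt d * M / δ := by positivity
    set s : ℝ := M / ((n₀:ℝ) + 1) with hsdef
    have hs : 0 < s := by positivity
    have hMs : ((n₀:ℝ) + 1) * s = M := by
      rw [hsdef]; field_simp
    have hbnd : ∀ p ∈ S, ∀ j, 0 ≤ p j - a j ∧ p j - a j ≤ ((n₀ : ℝ) + 1) * s := by
      intro p hp j
      obtain ⟨h1, h2⟩ := hsub p hp j
      exact ⟨by linarith, by linarith⟩
    have hinj : Set.InjOn (cellIdx a s n₀) S := by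
      intro p hp q hq hpq
      by_contra hne
      have hsep' := hsep p (Finset.mem_coe.mp hp) q (Finset.mem_coe.mp hq) hne
      have hclose : ∀ j, |p j - q j| ≤ s :=
        same_cell_close hs (fun j => (hbnd p hp j).1) (fun j => (hbnd p hp j).2)
          (fun j => (hbnd q hq j).1) (fun j => (hbnd q hq j).2) hpq
      have hdist : dist p q ≤ Real.sqrt d * s := euc_dist_le p q hs.le hclose
      have hfl : Real.sqrt d * M / δ < (n₀:ℝ) + 1 := Nat.lt_floor_add_one _
      have hlt : Real.sqrt d * s < δ := by
        rw [hsdef, mul_div_assoc']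
        rw [div_lt_iff₀ (by positivity)]
        rw [div_lt_iff₀ hδ] at hfl
        linarith
      linarith
    have hcards : S.card ≤ (n₀+1)^d := by
      have hmaps : ∀ p ∈ S, cellIdx a s n₀ p ∈
          Fintype.piFinset (fun _ : Fin d => Finset.range (n₀+1)) := by
        intro p hp
        rw [Fintype.mem_piFinset]
        intro j
        rw [Finset.mem_range]
        exact Nat.lt_succ_of_le (cellIdx_le a s n₀ p j)
      have := Finset.card_le_card_of_injOn (cellIdx a s n₀) hmaps hinj
      simpa [Fintype.card_piFinset] using this
    have hfloor : (n₀ : ℝ) ≤ Real.sqrt d * M / δ := Nat.floor_le hn0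
    have h1le : (1:ℝ) ≤ Real.sqrt d * M / δ := by
      rw [le_div_iff₀ hδ]
      nlinarith
    have h4 : ((n₀:ℝ) + 1) ≤ 2 * Real.sqrt d * M / δ := by
      have : 2 * Real.sqrt d * M / δ = Real.sqrt d * M / δ + Real.sqrt d * M / δ := by ring
      rw [this]
      linarith
    have h5 : (S.card:ℝ) ≤ ((n₀:ℝ) + 1)^d := by
      have := (Nat.cast_le (α := ℝ)).mpr hcards
      push_cast at this
      convert this using 2
    have h6 : ((n₀:ℝ) + 1)^d ≤ (2 * Real.sqrt d * M / δ)^d :=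
      pow_le_pow_left₀ (by positivity) h4 d
    have h7 : (2 * Real.sqrt d / δ) ^ d * M ^ d = (2 * Real.sqrt d * M / δ)^d := by
      rw [← mul_pow]
      congr 1
      ring
    linarith
  | succ J IH =>
    intro M a S hM hsub hsep hcard
    have hm : 0 < t * k := Nat.mul_pos ht hk
    have hmR : (0:ℝ) < ((t*k:ℕ):ℝ) := by exact_mod_cast hm
    have hM0 : 0 < M := lt_of_lt_of_le (by positivity) hM
    set s : ℝ := M / ((t*k : ℕ):ℝ) with hsdef
    have hs : 0 < s := div_pos hM0 hmR
    have hMs : (((t*k-1:ℕ):ℝ) + 1) * s = M := by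
      have hc : ((t*k-1:ℕ):ℝ) + 1 = ((t*k:ℕ):ℝ) := by
        have h := Nat.succ_pred_eq_of_pos hm
        exact_mod_cast h
      rw [hc, hsdef]
      field_simp
    have hbnd : ∀ p ∈ S, ∀ j, 0 ≤ p j - a j ∧ p j - a j ≤ (((t*k-1:ℕ):ℝ) + 1) * s := by
      intro p hp j
      obtain ⟨h1, h2⟩ := hsub p hp j
      exact ⟨by linarith, by rw [hMs]; linarith⟩
    set F : (Fin d → ℕ) → Finset (EuclideanSpace ℝ (Fin d)) :=
      fun f => S.filter (fun p => cellIdx a s (t*k-1) p = f) with hF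
    have hS0 : 0 < (S.card : ℝ) := by
      by_contra h
      push_neg at h
      have h0 : (S.card:ℝ) = 0 := le_antisymm h (by positivity)
      rw [h0, zero_mul] at hcard
      have : (0:ℝ) < (2*Real.sqrt d/δ)^d * M^d := by positivity
      linarith
    by_cases hA : ∃ f : Fin d → ℕ,
        (1 + 1/(2*(k:ℝ)^d)) * S.card ≤ ((t*k:ℕ):ℝ)^d * ((F f).card : ℝ)
    · obtain ⟨f, hf⟩ := hA
      have harg1 : δ * ((t * k : ℕ) : ℝ) ^ J ≤ s := by
        rw [hsdef, le_div_iff₀ hmR]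
        rw [pow_succ] at hM
        linarith
      have harg2 : ∀ p ∈ F f, ∀ j,
          p j ∈ Set.Icc ((fun j => a j + (f j : ℝ) * s) j)
            ((fun j => a j + (f j : ℝ) * s) j + s) := by
        intro p hp j
        have hpS : p ∈ S := Finset.mem_of_mem_filter p hp
        have hpf : cellIdx a s (t*k-1) p = f := (Finset.mem_filter.mp hp).2
        obtain ⟨hb0, hb1⟩ := hbnd p hpS j
        obtain ⟨hl, hu⟩ := cellIdx_bounds hs hb0 hb1
        rw [hpf] at hl hu
        constructor
        · show a j + (f j : ℝ) * s ≤ p j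
          linarith
        · show p j ≤ a j + (f j : ℝ) * s + s
          linarith
      have harg3 : SeparatedEuc d δ (F f) := by
        intro x hx y hy hxy
        exact hsep x (Finset.mem_of_mem_filter x hx) y (Finset.mem_of_mem_filter y hy) hxy
      have harg4 : (2 * Real.sqrt d / δ) ^ d * s ^ d
          < ((F f).card : ℝ) * (1 + 1 / (2 * (k : ℝ) ^ d)) ^ J := by
        have hsd : s ^ d = M ^ d / ((t*k:ℕ):ℝ)^d := by
          rw [hsdef, div_pow]
        rw [hsd]
        have hP : (0:ℝ) < (1 + 1/(2*(k:ℝ)^d))^J := by positivity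
        rw [mul_div_assoc', div_lt_iff₀ (by positivity)]
        have hstep : (S.card:ℝ) * (1 + 1/(2*(k:ℝ)^d))^(J+1)
            ≤ ((F f).card : ℝ) * (1 + 1/(2*(k:ℝ)^d))^J * ((t*k:ℕ):ℝ)^d := by
          have h1 := mul_le_mul_of_nonneg_right hf hP.le
          calc (S.card:ℝ) * (1 + 1/(2*(k:ℝ)^d))^(J+1)
              = (1 + 1/(2*(k:ℝ)^d)) * (S.card:ℝ) * (1 + 1/(2*(k:ℝ)^d))^J := by
                rw [pow_succ]; ring
            _ ≤ ((t*k:ℕ):ℝ)^d * ((F f).card : ℝ) * (1 + 1/(2*(k:ℝ)^d))^J := h1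
            _ = ((F f).card : ℝ) * (1 + 1/(2*(k:ℝ)^d))^J * ((t*k:ℕ):ℝ)^d := by ring
        linarith
      obtain ⟨q, hqinj, hqmem, hgrid⟩ := IH s (WithLp.toLp 2 (fun j => a j + (f j : ℝ) * s)) (F f)
        harg1 harg2 harg3 harg4
      exact ⟨q, hqinj, fun i => Finset.mem_of_mem_filter _ (hqmem i), hgrid⟩
    · push_neg at hA
      set cells := Fintype.piFinset (fun _ : Fin d => Finset.range (t*k)) with hcells
      have hmapsc : ∀ p ∈ S, cellIdx a s (t*k-1) p ∈ cells := by
        intro p hp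
        rw [hcells, Fintype.mem_piFinset]
        intro j
        rw [Finset.mem_range]
        have := cellIdx_le a s (t*k-1) p j
        omega
      have hsum : S.card = ∑ f ∈ cells, (F f).card :=
        Finset.card_eq_sum_card_fiberwise hmapsc
      set T := cells.filter (fun f => (F f).Nonempty) with hT
      have hsumT : ∑ f ∈ T, (F f).card = S.card := by
        rw [hsum]
        refine Finset.sum_subset (Finset.filter_subset _ _) ?_
        intro f hf hnf
        rw [Finset.card_eq_zero, ← Finset.not_nonempty_iff_eq_empty]
        intro hne
        exact hnf (Finset.mem_filter.mpr ⟨hf, hne⟩)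
      have hTcard : ((t*k:ℕ):ℝ)^d ≤ (1 + 1/(2*(k:ℝ)^d)) * T.card := by
        have h1 := Finset.sum_le_card_nsmul T (fun f => ((t*k:ℕ):ℝ)^d * ((F f).card : ℝ))
          ((1 + 1/(2*(k:ℝ)^d)) * S.card) (fun f _ => (hA f).le)
        have h2 : ∑ f ∈ T, ((t*k:ℕ):ℝ)^d * ((F f).card : ℝ)
            = ((t*k:ℕ):ℝ)^d * (S.card : ℝ) := by
          rw [← Finset.mul_sum]
          congr 1
          exact_mod_cast congrArg (Nat.cast (R := ℝ)) hsumT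
        rw [h2, nsmul_eq_mul] at h1
        have hmd : (0:ℝ) < ((t*k:ℕ):ℝ)^d := by positivity
        nlinarith
      set Tc := cells \ T with hTc
      have hTle : T ⊆ cells := Finset.filter_subset _ _
      have hcellscard : cells.card = (t*k)^d := by
        simp [hcells, Fintype.card_piFinset]
      have hTccardR : (Tc.card : ℝ) < (t:ℝ)^d := by
        have h1 : Tc.card = cells.card - T.card := Finset.card_sdiff_of_subset hTle
        have h2 : T.card ≤ cells.card := Finset.card_le_card hTle
        have hnat : Tc.card + T.card = (t*k)^d := by omega
        have h3 : (Tc.card : ℝ) = ((t*k:ℕ):ℝ)^d - T.card := by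
          have := congrArg (Nat.cast (R := ℝ)) hnat
          push_cast at this ⊢
          linarith
        have h4 : (T.card : ℝ) ≤ ((t*k:ℕ):ℝ)^d := by
          have : T.card ≤ (t*k)^d := by omega
          have := congrArg id (rfl : 0 = 0)
          push_cast [← hnat]
          have h2R := (Nat.cast_le (α := ℝ)).mpr h2
          push_cast at h3 ⊢
          linarith [Nat.cast_nonneg (α := ℝ) Tc.card]
        have h5 : ((t*k:ℕ):ℝ)^d = (t:ℝ)^d * (k:ℝ)^d := by
          push_cast
          rw [mul_pow]
        have h6 : (1 / (2*(k:ℝ)^d)) * ((t*k:ℕ):ℝ)^d = (t:ℝ)^d / 2 := by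
          rw [h5]
          field_simp
        have htd : (0:ℝ) < (t:ℝ)^d := by positivity
        have hmono := mul_le_mul_of_nonneg_left h4 hη.le
        have hexp : (1 + 1/(2*(k:ℝ)^d)) * (T.card:ℝ)
            = (T.card:ℝ) + 1/(2*(k:ℝ)^d) * (T.card:ℝ) := by ring
        linarith
      set pats := Fintype.piFinset (fun _ : Fin d => Finset.range t) with hpats
      set Bad := pats.filter
        (fun v => ∃ i : Fin d → Fin k, ¬ (F (fun j => v j + t * (i j : ℕ))).Nonempty) with hBad
      have hembed : ∀ (v : Fin d → ℕ), (∀ j, v j < t) → ∀ (i : Fin d → Fin k) (j : Fin d),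
          v j + t * (i j : ℕ) < t * k := by
        intro v hv i j
        calc v j + t * (i j : ℕ) < t + t * (i j : ℕ) := by
              exact Nat.add_lt_add_right (hv j) _
          _ = t * ((i j : ℕ) + 1) := by ring
          _ ≤ t * k := Nat.mul_le_mul_left t (i j).isLt
      have hBadTc : Bad.card ≤ Tc.card := by
        set g : (Fin d → ℕ) → (Fin d → ℕ) := fun v =>
          if h : ∃ i : Fin d → Fin k, ¬ (F (fun j => v j + t * (i j : ℕ))).Nonempty
          then (fun j => v j + t * ((h.choose j : ℕ))) else v with hg
        refine Finset.card_le_card_of_injOn g ?_ ?_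
        · intro v hv
          obtain ⟨hvp, hve⟩ := Finset.mem_filter.mp hv
          have hvt : ∀ j, v j < t := by
            intro j
            have := (Fintype.mem_piFinset.mp hvp) j
            rwa [Finset.mem_range] at this
          have hgv : g v = fun j => v j + t * ((hve.choose j : ℕ)) := by
            rw [hg]; simp only [dif_pos hve]
          rw [Finset.mem_coe, Finset.mem_sdiff]
          constructor
          · rw [hgv, hcells, Fintype.mem_piFinset]
            intro j
            rw [Finset.mem_range]
            exact hembed v hvt _ j
          · intro hmemT
            have hne := (Finset.mem_filter.mp hmemT).2
            rw [hgv] at hne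
            exact hve.choose_spec hne
        · intro v hv v' hv' hgv
          obtain ⟨hvp, hve⟩ := Finset.mem_filter.mp (Finset.mem_coe.mp hv)
          obtain ⟨hvp', hve'⟩ := Finset.mem_filter.mp (Finset.mem_coe.mp hv')
          have hvt : ∀ j, v j < t := fun j => by
            have := (Fintype.mem_piFinset.mp hvp) j
            rwa [Finset.mem_range] at this
          have hvt' : ∀ j, v' j < t := fun j => by
            have := (Fintype.mem_piFinset.mp hvp') j
            rwa [Finset.mem_range] at this
          have hgv1 : g v = fun j => v j + t * ((hve.choose j : ℕ)) := by
            rw [hg]; simp only [dif_pos hve]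
          have hgv2 : g v' = fun j => v' j + t * ((hve'.choose j : ℕ)) := by
            rw [hg]; simp only [dif_pos hve']
          funext j
          have hj : v j + t * ((hve.choose j : ℕ)) = v' j + t * ((hve'.choose j : ℕ)) := by
            rw [hgv1, hgv2] at hgv
            exact congrFun hgv j
          have e1 : (v j + t * ((hve.choose j : ℕ))) % t = v j := by
            rw [Nat.add_mul_mod_self_left, Nat.mod_eq_of_lt (hvt j)]
          have e2 : (v' j + t * ((hve'.choose j : ℕ))) % t = v' j := by
            rw [Nat.add_mul_mod_self_left, Nat.mod_eq_of_lt (hvt' j)]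
          rw [← e1, ← e2, hj]
      have hpatscard : pats.card = t^d := by
        simp [hpats, Fintype.card_piFinset]
      have hBadlt : Bad.card < pats.card := by
        have hTcN : Tc.card < t^d := by exact_mod_cast hTccardR
        rw [hpatscard]
        omega
      have hssub : Bad ⊂ pats := by
        refine Finset.ssubset_iff_subset_ne.mpr ⟨Finset.filter_subset _ _, ?_⟩
        intro h
        rw [h] at hBadlt
        exact lt_irrefl _ hBadlt
      obtain ⟨v, hvp, hvnb⟩ := Finset.exists_of_ssubset hssub
      have hvt : ∀ j, v j < t := fun j => by
        have := (Fintype.mem_piFinset.mp hvp) j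
        rwa [Finset.mem_range] at this
      have hvgood : ∀ i : Fin d → Fin k, (F (fun j => v j + t * (i j : ℕ))).Nonempty := by
        by_contra h
        push_neg at h
        obtain ⟨i, hi⟩ := h
        exact hvnb (Finset.mem_filter.mpr ⟨hvp, ⟨i, Finset.not_nonempty_iff_eq_empty.mpr hi⟩⟩)
      choose q hq using hvgood
      have hqS : ∀ i, q i ∈ S := fun i => Finset.mem_of_mem_filter _ (hq i)
      have hqc : ∀ i, cellIdx a s (t*k-1) (q i) = fun j => v j + t * (i j : ℕ) :=
        fun i => (Finset.mem_filter.mp (hq i)).2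
      refine ⟨q, ?_, hqS, ?_⟩
      · intro i i' he
        funext j
        have h1 := congrFun (hqc i) j
        have h2 := congrFun (hqc i') j
        rw [he] at h1
        rw [h1] at h2
        have : (i j : ℕ) = (i' j : ℕ) := by
          have := Nat.add_left_cancel h2
          exact Nat.eq_of_mul_eq_mul_left ht this
        exact Fin.ext this
      · refine ⟨(WithLp.toLp 2 (fun j => a j + (v j : ℝ) * s + s/2) : EuclideanSpace ℝ (Fin d)),
          (t:ℝ) * s, by positivity, ?_⟩
        intro i
        have hcoord : ∀ j, |q i j -
            ((fun j => a j + (v j : ℝ) * s + s/2 + ((t:ℝ)*s) * ((i j : ℕ) : ℝ)) j)| ≤ s/2 := by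
          intro j
          obtain ⟨hb0, hb1⟩ := hbnd (q i) (hqS i) j
          obtain ⟨hl, hu⟩ := cellIdx_bounds hs hb0 hb1
          have hcj : cellIdx a s (t*k-1) (q i) j = v j + t * (i j : ℕ) := congrFun (hqc i) j
          rw [hcj] at hl hu
          push_cast at hl hu
          rw [abs_le]
          constructor <;> [skip; skip] <;> (simp only []; nlinarith)
        have hd2 : dist (q i)
            (WithLp.toLp 2 (fun j => a j + (v j : ℝ) * s + s/2 + ((t:ℝ)*s) * ((i j : ℕ) : ℝ)) :
              EuclideanSpace ℝ (Fin d)) ≤ Real.sqrt d * (s/2) :=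
          euc_dist_le _ _ (by positivity) hcoord
        have hd3 : Real.sqrt d * (s/2) ≤ ε * ((t:ℝ) * s) := by
          have := mul_le_mul_of_nonneg_right htε (by positivity : (0:ℝ) ≤ s/2)
          nlinarith
        exact le_trans hd2 hd3

theorem approx_grid_of_dense_separated (d k : ℕ) (hd : 0 < d) (hk : 0 < k)
    (c δ ε : ℝ) (hc : 0 < c) (hδ : 0 < δ) (hε : 0 < ε) (hε' : ε ≤ 1 / 3) :
    ∃ Z₀ : ℝ, 0 < Z₀ ∧
      ∀ L : ℝ, Z₀ ≤ L → ∀ S : Finset (EuclideanSpace ℝ (Fin d)),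
        (∀ p ∈ S, ∀ j : Fin d, p j ∈ Set.Icc (0 : ℝ) L) →
        SeparatedEuc d δ S → c * L ^ d ≤ S.card →
        ∃ q : (Fin d → Fin k) → EuclideanSpace ℝ (Fin d),
          Function.Injective q ∧ (∀ i, q i ∈ S) ∧ IsApproxGrid d k ε q := by
  have hd1 : (1:ℝ) ≤ Real.sqrt d := Real.one_le_sqrt.mpr (by exact_mod_cast hd)
  set t : ℕ := ⌈Real.sqrt d / (2 * ε)⌉₊ with htdef
  have ht : 0 < t := Nat.ceil_pos.mpr (by positivity)
  have htε : Real.sqrt d ≤ 2 * ε * t := by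
    have h1 : Real.sqrt d / (2 * ε) ≤ (t : ℝ) := Nat.le_ceil _
    rw [div_le_iff₀ (by positivity)] at h1
    linarith
  have hη1 : (1:ℝ) < 1 + 1 / (2 * (k:ℝ)^d) := by
    have : (0:ℝ) < 1 / (2 * (k:ℝ)^d) := by positivity
    linarith
  obtain ⟨J, hJ⟩ := pow_unbounded_of_one_lt ((2 * Real.sqrt d / δ)^d / c) hη1
  refine ⟨δ * ((t * k : ℕ) : ℝ) ^ J, by positivity, ?_⟩
  intro L hL S hsub hsep hcard
  have hL0 : 0 < L := lt_of_lt_of_le (by positivity) hL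
  refine key_lemma d k t hd hk ht δ ε hδ hε htε J L 0 S hL ?_ hsep ?_
  · intro p hp j
    have := hsub p hp j
    simpa using this
  · have h1 : ((2 * Real.sqrt d / δ)^d / c) * (c * L^d)
        < (1 + 1 / (2 * (k:ℝ)^d))^J * (c * L^d) :=
      mul_lt_mul_of_pos_right hJ (by positivity)
    have h2 : ((2 * Real.sqrt d / δ)^d / c) * (c * L^d) = (2 * Real.sqrt d / δ)^d * L^d := by
      field_simp
    have h3 : (1 + 1 / (2 * (k:ℝ)^d))^J * (c * L^d)
        ≤ (1 + 1 / (2 * (k:ℝ)^d))^J * (S.card : ℝ) :=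
      mul_le_mul_of_nonneg_left hcard (by positivity)
    have h4 : (1 + 1 / (2 * (k:ℝ)^d))^J * (S.card : ℝ)
        = (S.card : ℝ) * (1 + 1 / (2 * (k:ℝ)^d))^J := by ring
    linarith
end

section
/- For every dimension d, positive integer k, and ε > 0, there exists N = N(d, k, ε) such that every set of at least N points in ℝ^d contains a subset of k points that is ε-collinear (every triangle determined by the subset has at least two interior angles of measure at most ε). -/
open EuclideanGeometry

open Real InnerProductGeometry
open scoped RealInnerProductSpace

section Geometry

variable {E : Type*} [NormedAddCommGroup E] [InnerProductSpace ℝ E]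

lemma unit_angle_le {u v : E} (hu : ‖u‖ = 1) (hv : ‖v‖ = 1) :
    InnerProductGeometry.angle u v ≤ π / 2 * ‖u - v‖ := by
  have hθ0 := InnerProductGeometry.angle_nonneg u v
  have hθπ := InnerProductGeometry.angle_le_pi u v
  have hcos : Real.cos (InnerProductGeometry.angle u v) = ⟪u, v⟫ := by
    rw [InnerProductGeometry.cos_angle, hu, hv]; simp
  have hb : Real.cos (InnerProductGeometry.angle u v)
      ≤ 1 - 2 / π ^ 2 * (InnerProductGeometry.angle u v) ^ 2 :=
    Real.cos_le_one_sub_mul_cos_sq (by rw [abs_of_nonneg hθ0]; exact hθπ)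
  have hns : ‖u - v‖ ^ 2 = 2 - 2 * ⟪u, v⟫ := by
    rw [norm_sub_sq_real, hu, hv]; ring
  have hpi := Real.pi_pos
  have hn0 : (0:ℝ) ≤ ‖u - v‖ := norm_nonneg _
  set θ := InnerProductGeometry.angle u v with hθ
  have hπ2 : (0:ℝ) < π ^ 2 := by positivity
  have h1 : 2 / π ^ 2 * θ ^ 2 ≤ ‖u - v‖ ^ 2 / 2 := by linarith
  have h3 : 2 / π ^ 2 * θ ^ 2 * π ^ 2 = 2 * θ ^ 2 := by field_simp
  have h2 : θ ^ 2 ≤ (π / 2 * ‖u - v‖) ^ 2 := by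
    nlinarith [mul_le_mul_of_nonneg_right h1 hπ2.le]
  calc θ = Real.sqrt (θ ^ 2) := (Real.sqrt_sq hθ0).symm
    _ ≤ Real.sqrt ((π / 2 * ‖u - v‖) ^ 2) := Real.sqrt_le_sqrt h2
    _ = π / 2 * ‖u - v‖ := Real.sqrt_sq (by positivity)

lemma unit_angle_ball {u v c : E} {r : ℝ} (hu : ‖u‖ = 1) (hv : ‖v‖ = 1)
    (h1 : dist u c < r) (h2 : dist v c < r) :
    InnerProductGeometry.angle u v ≤ π * r := by
  have h3 : ‖u - v‖ ≤ dist u c + dist c v := by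
    rw [← dist_eq_norm]; exact dist_triangle u c v
  have hpi := Real.pi_pos
  have := unit_angle_le hu hv
  rw [dist_comm c v] at h3
  nlinarith

lemma norm_dir {x y : E} (h : x ≠ y) : ‖‖y - x‖⁻¹ • (y - x)‖ = 1 := by
  have h0 : y - x ≠ 0 := sub_ne_zero.mpr (Ne.symm h)
  rw [norm_smul, norm_inv, norm_norm, inv_mul_cancel₀ (norm_ne_zero_iff.mpr h0)]

lemma angle_eq_dir {x y z : E} (hxy : x ≠ y) (hxz : x ≠ z) :
    EuclideanGeometry.angle y x z
      = InnerProductGeometry.angle (‖y - x‖⁻¹ • (y - x)) (‖z - x‖⁻¹ • (z - x)) := by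
  have h1 : (0:ℝ) < ‖y - x‖⁻¹ :=
    inv_pos.mpr (norm_pos_iff.mpr (sub_ne_zero.mpr (Ne.symm hxy)))
  have h2 : (0:ℝ) < ‖z - x‖⁻¹ :=
    inv_pos.mpr (norm_pos_iff.mpr (sub_ne_zero.mpr (Ne.symm hxz)))
  rw [EuclideanGeometry.angle, vsub_eq_sub, vsub_eq_sub,
    InnerProductGeometry.angle_smul_left_of_pos _ _ h1,
    InnerProductGeometry.angle_smul_right_of_pos _ _ h2]

lemma angle_vertex_first {x y z c : E} {r : ℝ} (hxy : x ≠ y) (hxz : x ≠ z)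
    (h1 : dist (‖y - x‖⁻¹ • (y - x)) c < r) (h2 : dist (‖z - x‖⁻¹ • (z - x)) c < r) :
    EuclideanGeometry.angle y x z ≤ π * r := by
  rw [angle_eq_dir hxy hxz]
  exact unit_angle_ball (norm_dir hxy) (norm_dir hxz) h1 h2

lemma angle_vertex_last {x y z c : E} {r : ℝ} (hxz : x ≠ z) (hyz : y ≠ z)
    (h1 : dist (‖z - x‖⁻¹ • (z - x)) c < r) (h2 : dist (‖z - y‖⁻¹ • (z - y)) c < r) :
    EuclideanGeometry.angle x z y ≤ π * r := by
  have heq : EuclideanGeometry.angle x z y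
      = InnerProductGeometry.angle (z - x) (z - y) := by
    rw [EuclideanGeometry.angle, vsub_eq_sub, vsub_eq_sub, ← InnerProductGeometry.angle_neg_neg,
      neg_sub, neg_sub]
  rw [heq, ← InnerProductGeometry.angle_smul_left_of_pos (r := ‖z - x‖⁻¹) (z - x) (z - y)
      (inv_pos.mpr (norm_pos_iff.mpr (sub_ne_zero.mpr (Ne.symm hxz)))),
    ← InnerProductGeometry.angle_smul_right_of_pos (r := ‖z - y‖⁻¹) _ _
      (inv_pos.mpr (norm_pos_iff.mpr (sub_ne_zero.mpr (Ne.symm hyz))))]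
  exact unit_angle_ball (norm_dir hxz) (norm_dir hyz) h1 h2

end Geometry

lemma prehom {α β : Type*} [DecidableEq α] [DecidableEq β] [Fintype β] [Nonempty β]
    (f : α → α → β) :
    ∀ (m : ℕ) (S : Finset α), (Fintype.card β + 1) ^ m ≤ S.card →
    ∃ L : List (α × β), L.length = m ∧ (∀ p ∈ L, p.1 ∈ S) ∧
      L.Pairwise (fun p q => p.1 ≠ q.1 ∧ f p.1 q.1 = p.2) := by
  intro m
  induction m with
  | zero => exact fun S _ => ⟨[], rfl, by simp, List.Pairwise.nil⟩
  | succ m ih =>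
    intro S hS
    set c := Fintype.card β with hc
    have hpow : 1 ≤ (c + 1) ^ m := Nat.one_le_pow _ _ (Nat.succ_pos c)
    have hpow' : (c + 1) ^ (m + 1) = c * (c + 1) ^ m + (c + 1) ^ m := by ring
    have hS1 : 0 < S.card := by omega
    obtain ⟨a, ha⟩ := Finset.card_pos.mp hS1
    have hcard : (Finset.univ : Finset β).card * (c + 1) ^ m ≤ (S.erase a).card := by
      rw [Finset.card_univ, ← hc, Finset.card_erase_of_mem ha]
      omega
    obtain ⟨b, -, hb⟩ := Finset.exists_le_card_fiber_of_mul_le_card_of_maps_to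
      (fun x _ => Finset.mem_univ (f a x)) Finset.univ_nonempty hcard
    obtain ⟨L', hlen, hmem, hpair⟩ := ih _ hb
    refine ⟨(a, b) :: L', by simp [hlen], ?_, ?_⟩
    · rintro p hp
      rcases List.mem_cons.mp hp with h | h
      · simpa [h] using ha
      · exact Finset.mem_of_mem_erase (Finset.mem_of_mem_filter _ (hmem p h))
    · refine List.pairwise_cons.mpr ⟨fun q hq => ?_, hpair⟩
      have h2 := Finset.mem_filter.mp (hmem q hq)
      exact ⟨(Finset.ne_of_mem_erase (Finset.mem_of_mem_filter _ (hmem q hq))).symm, h2.2⟩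

/-- A finite set in `ℝ^d` is ε-collinear if every triangle determined by three
distinct points of it has at least two interior angles of measure at most ε. -/
def EpsCollinear (d : ℕ) (ε : ℝ) (K : Finset (EuclideanSpace ℝ (Fin d))) : Prop :=
  ∀ p ∈ K, ∀ q ∈ K, ∀ r ∈ K, p ≠ q → p ≠ r → q ≠ r →
    (∠ q p r ≤ ε ∧ ∠ p q r ≤ ε) ∨ (∠ q p r ≤ ε ∧ ∠ p r q ≤ ε) ∨
    (∠ p q r ≤ ε ∧ ∠ p r q ≤ ε)

theorem exists_eps_collinear_subset (d k : ℕ) (hd : 0 < d) (hk : 0 < k)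
    (ε : ℝ) (hε : 0 < ε) :
    ∃ N : ℕ, ∀ S : Finset (EuclideanSpace ℝ (Fin d)), N ≤ S.card →
      ∃ K ⊆ S, K.card = k ∧ EpsCollinear d ε K := by
  classical
  set E := EuclideanSpace ℝ (Fin d) with hE
  set r : ℝ := ε / π with hrdef
  have hπ := Real.pi_pos
  have hr : 0 < r := div_pos hε hπ
  have hπr : π * r = ε := by
    rw [hrdef, mul_div_cancel₀ _ (ne_of_gt hπ)]
  obtain ⟨t, htfin, htcov⟩ :=
    Metric.totallyBounded_iff.mp (isCompact_sphere (0:E) 1).totallyBounded r hr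
  set T : Finset E := htfin.toFinset with hT
  set β := Option {x // x ∈ T} with hβ
  let f : E → E → β := fun x y =>
    if h : ∃ c : {x // x ∈ T}, dist (‖y - x‖⁻¹ • (y - x)) (c : E) < r then some h.choose
    else none
  have hfsome : ∀ x y : E, x ≠ y →
      ∃ c : {x // x ∈ T}, dist (‖y - x‖⁻¹ • (y - x)) (c : E) < r := by
    intro x y hxy
    have hmem : (‖y - x‖⁻¹ • (y - x)) ∈ Metric.sphere (0:E) 1 := by
      rw [mem_sphere_zero_iff_norm]
      exact norm_dir hxy
    obtain ⟨c, hc, hball⟩ := Set.mem_iUnion₂.mp (htcov hmem)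
    exact ⟨⟨c, by simpa [hT] using hc⟩, Metric.mem_ball.mp hball⟩
  have hfball : ∀ x y : E, ∀ c : {x // x ∈ T}, f x y = some c →
      dist (‖y - x‖⁻¹ • (y - x)) (c : E) < r := by
    intro x y c hf
    simp only [f] at hf
    split at hf
    next h =>
      obtain rfl : h.choose = c := Option.some_injective _ hf
      exact h.choose_spec
    next h => exact absurd hf.symm (Option.some_ne_none c)
  set m : ℕ := Fintype.card β * (k - 1) + 1 with hm
  refine ⟨(Fintype.card β + 1) ^ m, fun S hS => ?_⟩
  obtain ⟨L, hlen, hmemS, hpair⟩ := prehom f m S hS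
  have hget := List.pairwise_iff_get.mp hpair
  -- pigeonhole on colors of entries
  have hcard2 : (Finset.univ : Finset β).card * (k - 1)
      < (Finset.univ : Finset (Fin L.length)).card := by
    rw [Finset.card_univ, Finset.card_univ, Fintype.card_fin, hlen]
    omega
  obtain ⟨b, -, hbfiber⟩ := Finset.exists_lt_card_fiber_of_mul_lt_card_of_maps_to
    (fun (i : Fin L.length) _ => Finset.mem_univ ((L.get i).2)) hcard2
  obtain ⟨J, hJsub, hJcard⟩ := Finset.exists_subset_card_eq
    (s := Finset.filter (fun i => (L.get i).2 = b) Finset.univ) (n := k) (by omega)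
  have hJb : ∀ i ∈ J, (L.get i).2 = b := fun i hi => (Finset.mem_filter.mp (hJsub hi)).2
  have hinj : Set.InjOn (fun i => (L.get i).1) ↑J := by
    intro i _ j _ hij
    by_contra hne
    rcases lt_or_gt_of_ne hne with h | h
    · exact ((hget i j h).1 hij).elim
    · exact ((hget j i h).1 hij.symm).elim
  refine ⟨J.image (fun i => (L.get i).1), ?_, ?_, ?_⟩
  · intro x hx
    obtain ⟨i, _, rfl⟩ := Finset.mem_image.mp hx
    exact hmemS _ (by simpa using List.get_mem L i i.isLt)
  · rw [Finset.card_image_of_injOn hinj, hJcard]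
  -- key two-angle lemma for an ordered triple of indices in J
  have key : ∀ i ∈ J, ∀ j ∈ J, ∀ l ∈ J, i < j → j < l →
      ∠ (L.get j).1 (L.get i).1 (L.get l).1 ≤ ε ∧
      ∠ (L.get i).1 (L.get l).1 (L.get j).1 ≤ ε := by
    intro i hi j hj l hl hijlt hjllt
    set x := (L.get i).1
    set y := (L.get j).1
    set z := (L.get l).1
    have hij := hget i j hijlt
    have hil := hget i l (hijlt.trans hjllt)
    have hjl := hget j l hjllt
    have hxy : x ≠ y := hij.1
    have hxz : x ≠ z := hil.1
    have hyz : y ≠ z := hjl.1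
    -- all three colors equal b, and b = some c for some c
    have hfxy : f x y = b := by rw [hij.2]; exact hJb i hi
    have hfxz : f x z = b := by rw [hil.2]; exact hJb i hi
    have hfyz : f y z = b := by rw [hjl.2]; exact hJb j hj
    obtain ⟨c, hc⟩ : ∃ c : {x // x ∈ T}, b = some c := by
      rw [← hfxy]
      have h := hfsome x y hxy
      exact ⟨h.choose, by simp only [f, dif_pos h]⟩
    subst hc
    have d1 := hfball x y c hfxy
    have d2 := hfball x z c hfxz
    have d3 := hfball y z c hfyz
    constructor
    · exact le_of_le_of_eq (angle_vertex_first hxy hxz d1 d2) hπr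
    · exact le_of_le_of_eq (angle_vertex_last hxz hyz d2 d3) hπr
  -- verify ε-collinearity
  intro p hp q hq w hw hpq hpw hqw
  obtain ⟨ip, hip, hip'⟩ := Finset.mem_image.mp hp
  obtain ⟨iq, hiq, hiq'⟩ := Finset.mem_image.mp hq
  obtain ⟨iw, hiw, hiw'⟩ := Finset.mem_image.mp hw
  subst hip' hiq' hiw'
  have hpq' : ip ≠ iq := fun h => hpq (by rw [h])
  have hpw' : ip ≠ iw := fun h => hpw (by rw [h])
  have hqw' : iq ≠ iw := fun h => hqw (by rw [h])
  rcases lt_trichotomy ip iq with h1 | h1 | h1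
  · rcases lt_trichotomy iq iw with h2 | h2 | h2
    · -- p < q < w
      obtain ⟨a1, a2⟩ := key ip hip iq hiq iw hiw h1 h2
      exact Or.inr (Or.inl ⟨a1, a2⟩)
    · exact (hqw' h2).elim
    · rcases lt_trichotomy ip iw with h3 | h3 | h3
      · -- p < w < q
        obtain ⟨a1, a2⟩ := key ip hip iw hiw iq hiq h3 h2
        exact Or.inl ⟨by rwa [EuclideanGeometry.angle_comm] at a1, a2⟩
      · exact (hpw' h3).elim
      · -- w < p < q
        obtain ⟨a1, a2⟩ := key iw hiw ip hip iq hiq h3 h1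
        exact Or.inr (Or.inr ⟨by rwa [EuclideanGeometry.angle_comm] at a2, a1⟩)
  · exact (hpq' h1).elim
  · rcases lt_trichotomy ip iw with h2 | h2 | h2
    · -- q < p < w
      obtain ⟨a1, a2⟩ := key iq hiq ip hip iw hiw h1 h2
      exact Or.inr (Or.inr ⟨a1, by rwa [EuclideanGeometry.angle_comm] at a2⟩)
    · exact (hpw' h2).elim
    · rcases lt_trichotomy iq iw with h3 | h3 | h3
      · -- q < w < p
        obtain ⟨a1, a2⟩ := key iq hiq iw hiw ip hip h3 h2
        exact Or.inl ⟨a2, by rwa [EuclideanGeometry.angle_comm] at a1⟩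
      · exact (hqw' h3).elim
      · -- w < q < p
        obtain ⟨a1, a2⟩ := key iw hiw iq hiq ip hip h3 h1
        exact Or.inr (Or.inl ⟨by rwa [EuclideanGeometry.angle_comm] at a2,
          by rwa [EuclideanGeometry.angle_comm] at a1⟩)
end

section
/- In the plane, suppose all points of a finite set K have distinct x-coordinates and there is an interval J of length ε such that for every pair p, q ∈ K with x(p) < x(q), the angle that segment pq makes with the x-axis lies in J. Then K is ε-collinear: in every triangle determined by K, the angles at the leftmost and rightmost vertices are each at most ε. -/
open EuclideanGeometry

lemma polar_cos (v : EuclideanSpace ℝ (Fin 2)) (hv : 0 < v 0) :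
    ‖v‖ * Real.cos (Real.arctan (v 1 / v 0)) = v 0 := by
  have hnorm : ‖v‖ = Real.sqrt (v 0 ^ 2 + v 1 ^ 2) := by
    rw [EuclideanSpace.norm_eq]
    simp [Fin.sum_univ_two, Real.norm_eq_abs, sq_abs]
  have hpos : (0:ℝ) < v 0 ^ 2 + v 1 ^ 2 := by positivity
  rw [hnorm, Real.cos_arctan]
  have h1 : 1 + (v 1 / v 0) ^ 2 = (v 0 ^ 2 + v 1 ^ 2) / v 0 ^ 2 := by
    field_simp
  rw [h1, Real.sqrt_div hpos.le, Real.sqrt_sq hv.le]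
  have hs : Real.sqrt (v 0 ^ 2 + v 1 ^ 2) ≠ 0 := by positivity
  field_simp

lemma polar_sin (v : EuclideanSpace ℝ (Fin 2)) (hv : 0 < v 0) :
    ‖v‖ * Real.sin (Real.arctan (v 1 / v 0)) = v 1 := by
  have hnorm : ‖v‖ = Real.sqrt (v 0 ^ 2 + v 1 ^ 2) := by
    rw [EuclideanSpace.norm_eq]
    simp [Fin.sum_univ_two, Real.norm_eq_abs, sq_abs]
  have hpos : (0:ℝ) < v 0 ^ 2 + v 1 ^ 2 := by positivity
  rw [hnorm, Real.sin_arctan]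
  have h1 : 1 + (v 1 / v 0) ^ 2 = (v 0 ^ 2 + v 1 ^ 2) / v 0 ^ 2 := by
    field_simp
  rw [h1, Real.sqrt_div hpos.le, Real.sqrt_sq hv.le]
  have hs : Real.sqrt (v 0 ^ 2 + v 1 ^ 2) ≠ 0 := by positivity
  field_simp

lemma angle_eq_abs_arctan (v w : EuclideanSpace ℝ (Fin 2)) (hv : 0 < v 0) (hw : 0 < w 0) :
    InnerProductGeometry.angle v w
      = |Real.arctan (v 1 / v 0) - Real.arctan (w 1 / w 0)| := by
  have hvne : v ≠ 0 := fun h => by simp [h] at hv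
  have hwne : w ≠ 0 := fun h => by simp [h] at hw
  have hvn : (0:ℝ) < ‖v‖ := norm_pos_iff.mpr hvne
  have hwn : (0:ℝ) < ‖w‖ := norm_pos_iff.mpr hwne
  have h1 := polar_cos v hv
  have h2 := polar_sin v hv
  have h3 := polar_cos w hw
  have h4 := polar_sin w hw
  have hiv : (inner ℝ v w : ℝ) = v 0 * w 0 + v 1 * w 1 := by
    simp [PiLp.inner_apply, Fin.sum_univ_two, RCLike.inner_apply, mul_comm]
  have hinner : (inner ℝ v w : ℝ) = ‖v‖ * ‖w‖ *
      Real.cos (Real.arctan (v 1 / v 0) - Real.arctan (w 1 / w 0)) := by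
    rw [hiv, Real.cos_sub]
    linear_combination (-(w 0)) * h1 - (‖v‖ * Real.cos (Real.arctan (v 1 / v 0))) * h3
      - (w 1) * h2 - (‖v‖ * Real.sin (Real.arctan (v 1 / v 0))) * h4
  have hne : ‖v‖ * ‖w‖ ≠ 0 := by positivity
  have hdiv : (inner ℝ v w : ℝ) / (‖v‖ * ‖w‖)
      = Real.cos (Real.arctan (v 1 / v 0) - Real.arctan (w 1 / w 0)) := by
    rw [hinner]; field_simp
  rw [InnerProductGeometry.angle, hdiv]
  have haI := Real.arctan_mem_Ioo (v 1 / v 0)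
  have hbI := Real.arctan_mem_Ioo (w 1 / w 0)
  rw [← Real.cos_abs]
  refine Real.arccos_cos (abs_nonneg _) ?_
  rw [abs_sub_le_iff]
  obtain ⟨ha1, ha2⟩ := haI
  obtain ⟨hb1, hb2⟩ := hbI
  have hpi := Real.pi_pos
  constructor <;> linarith

theorem angles_small_of_slopes_in_interval (ε : ℝ) (hε : 0 < ε)
    (K : Finset (EuclideanSpace ℝ (Fin 2)))
    (hx : ∀ p ∈ K, ∀ q ∈ K, p ≠ q → p 0 ≠ q 0)
    (θ₀ : ℝ)
    (hslope : ∀ p ∈ K, ∀ q ∈ K, p 0 < q 0 →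
      Real.arctan ((q 1 - p 1) / (q 0 - p 0)) ∈ Set.Icc θ₀ (θ₀ + ε)) :
    ∀ p ∈ K, ∀ q ∈ K, ∀ r ∈ K, p 0 < q 0 → q 0 < r 0 →
      ∠ q p r ≤ ε ∧ ∠ q r p ≤ ε := by
  intro p hp q hq r hr hpq hqr
  have hpr : p 0 < r 0 := hpq.trans hqr
  have hsub : ∀ x y : EuclideanSpace ℝ (Fin 2), ∀ i, (x - y) i = x i - y i := by
    intro x y i; rfl
  have key : ∀ x y z : EuclideanSpace ℝ (Fin 2), x 0 < y 0 → x 0 < z 0 →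
      ∠ y x z = |Real.arctan ((y 1 - x 1) / (y 0 - x 0))
                - Real.arctan ((z 1 - x 1) / (z 0 - x 0))| := by
    intro x y z h1 h2
    rw [EuclideanGeometry.angle, vsub_eq_sub, vsub_eq_sub,
      angle_eq_abs_arctan (y - x) (z - x) (by rw [hsub]; linarith) (by rw [hsub]; linarith)]
    simp [hsub]
  have habs : ∀ s t : ℝ, s ∈ Set.Icc θ₀ (θ₀ + ε) → t ∈ Set.Icc θ₀ (θ₀ + ε) →
      |s - t| ≤ ε := by
    intro s t hs ht
    obtain ⟨hs1, hs2⟩ := hs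
    obtain ⟨ht1, ht2⟩ := ht
    rw [abs_sub_le_iff]
    constructor <;> linarith
  constructor
  · rw [key p q r hpq hpr]
    exact habs _ _ (hslope p hp q hq hpq) (hslope p hp r hr hpr)
  · rw [EuclideanGeometry.angle, vsub_eq_sub, vsub_eq_sub,
      ← InnerProductGeometry.angle_neg_neg, neg_sub, neg_sub,
      angle_eq_abs_arctan (r - q) (r - p) (by rw [hsub]; linarith) (by rw [hsub]; linarith)]
    simp only [hsub]
    exact habs _ _ (hslope q hq r hr hqr) (hslope p hp r hr hpr)
end

section
/- If S ⊆ ℝ^d is ε-collinear with 0 < ε < 1 and has diameter D, then every point of S lies within distance εD of the line through a diametral pair of S (a pair of points of S realizing the diameter D). -/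
open EuclideanGeometry

lemma aux_infDist_le (d : ℕ) (x y z : EuclideanSpace ℝ (Fin d)) (hxy : x ≠ y) :
    Metric.infDist z (affineSpan ℝ ({x, y} : Set (EuclideanSpace ℝ (Fin d))) : Set (EuclideanSpace ℝ (Fin d)))
      ≤ dist x z * Real.sin (∠ z x y) := by
  rcases eq_or_ne z x with rfl | hzx
  · have hmem : z ∈ (affineSpan ℝ ({z, y} : Set (EuclideanSpace ℝ (Fin d))) : Set (EuclideanSpace ℝ (Fin d))) := by
      exact subset_affineSpan ℝ _ (by simp)
    rw [Metric.infDist_zero_of_mem hmem]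
    exact mul_nonneg dist_nonneg (Real.sin_nonneg_of_nonneg_of_le_pi (angle_nonneg _ _ _) (angle_le_pi _ _ _))
  set u := y - x with hu_def
  set v := z - x with hv_def
  have hu : u ≠ 0 := sub_ne_zero.2 (Ne.symm hxy)
  have hv : v ≠ 0 := sub_ne_zero.2 hzx
  have hun : (0:ℝ) < ‖u‖ := norm_pos_iff.2 hu
  have hvn : (0:ℝ) < ‖v‖ := norm_pos_iff.2 hv
  set t : ℝ := (inner ℝ v u : ℝ) / ‖u‖ ^ 2 with ht_def
  have hw : AffineMap.lineMap x y t ∈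
      (affineSpan ℝ ({x, y} : Set (EuclideanSpace ℝ (Fin d))) : Set (EuclideanSpace ℝ (Fin d))) :=
    AffineMap.lineMap_mem_affineSpan_pair t x y
  refine le_trans (Metric.infDist_le_dist_of_mem hw) ?_
  have hdist : dist z (AffineMap.lineMap x y t) = ‖v - t • u‖ := by
    rw [dist_eq_norm, AffineMap.lineMap_apply, hv_def, hu_def]
    simp only [vsub_eq_sub, vadd_eq_add]
    congr 1
    abel
  rw [hdist]
  have hang : ∠ z x y = InnerProductGeometry.angle v u := rfl
  have hxz : dist x z = ‖v‖ := by rw [dist_comm, dist_eq_norm]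
  rw [hang, hxz]
  have hsin0 : 0 ≤ Real.sin (InnerProductGeometry.angle v u) :=
    Real.sin_nonneg_of_nonneg_of_le_pi (InnerProductGeometry.angle_nonneg v u)
      (InnerProductGeometry.angle_le_pi v u)
  have h1 : ‖v - t • u‖ ^ 2 = ‖v‖ ^ 2 - (inner ℝ v u : ℝ) ^ 2 / ‖u‖ ^ 2 := by
    rw [norm_sub_sq_real, real_inner_smul_right, norm_smul, Real.norm_eq_abs, mul_pow, sq_abs,
      ht_def]
    have : ‖u‖ ^ 2 ≠ 0 := by positivity
    field_simp
    ring
  have hcos : Real.cos (InnerProductGeometry.angle v u) = (inner ℝ v u : ℝ) / (‖v‖ * ‖u‖) :=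
    InnerProductGeometry.cos_angle v u
  have h2 : (‖v‖ * Real.sin (InnerProductGeometry.angle v u)) ^ 2
      = ‖v‖ ^ 2 - (inner ℝ v u : ℝ) ^ 2 / ‖u‖ ^ 2 := by
    have hs := Real.sin_sq_add_cos_sq (InnerProductGeometry.angle v u)
    have hvne : (‖v‖ : ℝ) ≠ 0 := ne_of_gt hvn
    have hune : (‖u‖ : ℝ) ≠ 0 := ne_of_gt hun
    have : Real.sin (InnerProductGeometry.angle v u) ^ 2
        = 1 - ((inner ℝ v u : ℝ) / (‖v‖ * ‖u‖)) ^ 2 := by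
      rw [← hcos]; linarith
    rw [mul_pow, this]
    field_simp
  have hsq : ‖v - t • u‖ ^ 2 = (‖v‖ * Real.sin (InnerProductGeometry.angle v u)) ^ 2 :=
    h1.trans h2.symm
  have hn1 : (0:ℝ) ≤ ‖v - t • u‖ := norm_nonneg _
  have hn2 : (0:ℝ) ≤ ‖v‖ * Real.sin (InnerProductGeometry.angle v u) := by positivity
  nlinarith [hsq, hn1, hn2]

theorem eps_collinear_near_diametral_line (d : ℕ) (hd : 0 < d) (ε D : ℝ)
    (hε0 : 0 < ε) (hε1 : ε < 1)
    (S : Finset (EuclideanSpace ℝ (Fin d))) (hcol : EpsCollinear d ε S)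
    (x y : EuclideanSpace ℝ (Fin d)) (hx : x ∈ S) (hy : y ∈ S)
    (hxy : dist x y = D) (hdiam : ∀ p ∈ S, ∀ q ∈ S, dist p q ≤ D) :
    ∀ z ∈ S, Metric.infDist z (affineSpan ℝ ({x, y} : Set (EuclideanSpace ℝ (Fin d))) : Set (EuclideanSpace ℝ (Fin d))) ≤ ε * D := by
  intro z hz
  have hD0 : 0 ≤ D := hxy ▸ dist_nonneg
  have hεD : 0 ≤ ε * D := mul_nonneg hε0.le hD0
  -- degenerate cases
  rcases eq_or_ne x y with rfl | hxy'
  · have hD : D = 0 := by rw [← hxy, dist_self]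
    have hzx : z = x := by
      have := hdiam z hz x hx
      rw [hD] at this
      exact dist_le_zero.mp this
    subst hzx
    rw [Metric.infDist_zero_of_mem (subset_affineSpan ℝ _ (by simp))]
    exact hεD
  rcases eq_or_ne z x with rfl | hzx
  · rw [Metric.infDist_zero_of_mem (subset_affineSpan ℝ _ (by simp))]
    exact hεD
  rcases eq_or_ne z y with rfl | hzy
  · rw [Metric.infDist_zero_of_mem (subset_affineSpan ℝ _ (by simp))]
    exact hεD
  -- bound via sin: if an angle at x (resp. y) is at most ε we're done
  have key : ∀ a b : EuclideanSpace ℝ (Fin d), a ≠ b → a ∈ S → ∠ z a b ≤ ε →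
      Metric.infDist z (affineSpan ℝ ({a, b} : Set (EuclideanSpace ℝ (Fin d))) : Set (EuclideanSpace ℝ (Fin d))) ≤ ε * D := by
    intro a b hab ha hangle
    refine le_trans (aux_infDist_le d a b z hab) ?_
    have hsin : Real.sin (∠ z a b) ≤ ε :=
      le_trans (Real.sin_le (angle_nonneg _ _ _)) hangle
    have hsin0 : 0 ≤ Real.sin (∠ z a b) :=
      Real.sin_nonneg_of_nonneg_of_le_pi (angle_nonneg _ _ _) (angle_le_pi _ _ _)
    have hda : dist a z ≤ D := hdiam a ha z hz
    calc dist a z * Real.sin (∠ z a b) ≤ D * ε := by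
          apply mul_le_mul hda hsin hsin0 hD0
      _ = ε * D := mul_comm _ _
  rcases hcol x hx y hy z hz hxy' (Ne.symm hzx) (Ne.symm hzy) with ⟨h1, _⟩ | ⟨h1, _⟩ | ⟨h1, _⟩
  · exact key x y hxy' hx (by rwa [angle_comm])
  · exact key x y hxy' hx (by rwa [angle_comm])
  · rw [Set.pair_comm]
    exact key y x (Ne.symm hxy') hy (by rwa [angle_comm])
end
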